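/- In an approximating Lorentzian pre-length space (with full-support probability measure) that is globally hyperbolic and causally simple (J^±(p) closed for all p), along any past-inextendible causal curve γ imprisoned-free, lim_{s→a} t⁻(γ(s)) = 0, where t⁻ is the averaged past volume function; equivalently, if the limit were positive there would exist a point q with the whole curve contained in J⁺(q), contradicting non-total imprisonment via compactness of J(q, γ(b)). -/

import Mathlib

open Set Filter Topology MeasureTheory TopologicalSpace

/-- A Lorentzian pre-length space structure on a metric space `X`:
a preorder `causal` (≤), a transitive relation `chron` (≪) contained in `causal`,
and a lower semicontinuous time separation function `tau` satisfying the usual axioms. -/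
structure LPLS (X : Type*) [MetricSpace X] where
  causal : X → X → Prop
  chron : X → X → Prop
  tau : X → X → ENNReal
  causal_refl : ∀ x, causal x x
  causal_trans : ∀ {x y z}, causal x y → causal y z → causal x z
  chron_trans : ∀ {x y z}, chron x y → chron y z → chron x z
  chron_subset_causal : ∀ {x y}, chron x y → causal x y
  tau_lsc : LowerSemicontinuous fun p : X × X => tau p.1 p.2
  tau_pos : ∀ {x y}, chron x y → 0 < tau x y
  tau_eq_zero : ∀ {x y}, ¬ causal x y → tau x y = 0
  tau_superadd : ∀ {x y z}, causal x y → causal y z → tau x y + tau y z ≤ tau x z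

variable {X : Type*} [MetricSpace X]

namespace LPLS

/-- chronological future `I⁺(p)` -/
def Iplus (L : LPLS X) (p : X) : Set X := {x | L.chron p x}
/-- chronological past `I⁻(p)` -/
def Iminus (L : LPLS X) (p : X) : Set X := {x | L.chron x p}
/-- causal future `J⁺(p)` -/
def Jplus (L : LPLS X) (p : X) : Set X := {x | L.causal p x}
/-- causal past `J⁻(p)` -/
def Jminus (L : LPLS X) (p : X) : Set X := {x | L.causal x p}

def IplusSet (L : LPLS X) (S : Set X) : Set X := ⋃ p ∈ S, L.Iplus p
def IminusSet (L : LPLS X) (S : Set X) : Set X := ⋃ p ∈ S, L.Iminus p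
def JplusSet (L : LPLS X) (S : Set X) : Set X := ⋃ p ∈ S, L.Jplus p
def JminusSet (L : LPLS X) (S : Set X) : Set X := ⋃ p ∈ S, L.Jminus p

/-- a map is locally Lipschitz on a set `I` -/
def LocLipOn (I : Set ℝ) (γ : ℝ → X) : Prop :=
  ∀ s ∈ I, ∃ K : NNReal, ∃ U ∈ nhdsWithin s I, LipschitzOnWith K γ U

/-- future-directed causal curve with parameter domain `I`:
non-constant, locally Lipschitz and monotone with respect to the causal relation. -/
def IsCausalCurveOn (L : LPLS X) (I : Set ℝ) (γ : ℝ → X) : Prop :=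
  (¬ ∀ s ∈ I, ∀ t ∈ I, γ s = γ t) ∧ LocLipOn I γ ∧
    ∀ ⦃s⦄, s ∈ I → ∀ ⦃t⦄, t ∈ I → s < t → L.causal (γ s) (γ t)

/-- future-directed timelike curve with parameter domain `I`. -/
def IsTimelikeCurveOn (L : LPLS X) (I : Set ℝ) (γ : ℝ → X) : Prop :=
  (¬ ∀ s ∈ I, ∀ t ∈ I, γ s = γ t) ∧ LocLipOn I γ ∧
    ∀ ⦃s⦄, s ∈ I → ∀ ⦃t⦄, t ∈ I → s < t → L.chron (γ s) (γ t)

/-- causal path-connectedness -/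
def CausallyPathConnected (L : LPLS X) : Prop :=
  (∀ p q : X, L.causal p q → p ≠ q →
    ∃ γ : ℝ → X, L.IsCausalCurveOn (Icc 0 1) γ ∧ γ 0 = p ∧ γ 1 = q) ∧
  (∀ p q : X, L.chron p q →
    ∃ γ : ℝ → X, L.IsTimelikeCurveOn (Icc 0 1) γ ∧ γ 0 = p ∧ γ 1 = q)

/-- the relation `≤_U`: connected by a causal curve inside `U` -/
def causalIn (L : LPLS X) (U : Set X) (p q : X) : Prop :=
  ∃ γ : ℝ → X, L.IsCausalCurveOn (Icc 0 1) γ ∧ γ 0 = p ∧ γ 1 = q ∧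
    ∀ s ∈ Icc (0:ℝ) 1, γ s ∈ U

/-- every point has a neighbourhood `U` such that `≤_U` is closed -/
def LocallyWeaklyCausallyClosed (L : LPLS X) : Prop :=
  ∀ p : X, ∃ U ∈ 𝓝 p, IsClosed {z : X × X | L.causalIn U z.1 z.2}

/-- `d`-compatibility: local uniform bound for the `d`-arclength of causal curves -/
def DCompatible (L : LPLS X) : Prop :=
  ∀ p : X, ∃ U ∈ 𝓝 p, ∃ C : ℝ, ∀ (I : Set ℝ) (γ : ℝ → X),
    L.IsCausalCurveOn I γ → (∀ s ∈ I, γ s ∈ U) → eVariationOn γ I ≤ ENNReal.ofReal C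

/-- a Lorentzian pre-length space with limit curves: causally path-connected,
locally weakly causally closed and `d`-compatible -/
def HasLimitCurves (L : LPLS X) : Prop :=
  L.CausallyPathConnected ∧ L.LocallyWeaklyCausallyClosed ∧ L.DCompatible

def FutureApproximating (L : LPLS X) : Prop := ∀ p : X, L.Jplus p ⊆ closure (L.Iplus p)
def PastApproximating (L : LPLS X) : Prop := ∀ p : X, L.Jminus p ⊆ closure (L.Iminus p)
def Approximating (L : LPLS X) : Prop := L.FutureApproximating ∧ L.PastApproximating

/-- non-total imprisonment: a uniform arclength bound for causal curves in any compact set -/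
def NonTotallyImprisoning (L : LPLS X) : Prop :=
  ∀ K : Set X, IsCompact K → ∃ C : ℝ, 0 < C ∧ ∀ (I : Set ℝ) (γ : ℝ → X),
    L.IsCausalCurveOn I γ → (∀ s ∈ I, γ s ∈ K) → eVariationOn γ I ≤ ENNReal.ofReal C

/-- future-inextendible (future-directed) causal curve, parametrized on `[0,∞)`;
by the analogue of [KuSa, Lemma 3.12] inextendibility is captured by the
nonexistence of the limit at `+∞`. -/
def IsFutureInextCurve (L : LPLS X) (γ : ℝ → X) : Prop :=
  L.IsCausalCurveOn (Ici 0) γ ∧ ∀ p : X, ¬ Tendsto γ atTop (𝓝 p)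

/-- past-inextendible (future-directed) causal curve, parametrized on `(-∞,0]`. -/
def IsPastInextCurve (L : LPLS X) (γ : ℝ → X) : Prop :=
  L.IsCausalCurveOn (Iic 0) γ ∧ ∀ p : X, ¬ Tendsto γ atBot (𝓝 p)

/-- doubly-inextendible causal curve, parametrized on all of `ℝ`. -/
def IsDoublyInextCurve (L : LPLS X) (γ : ℝ → X) : Prop :=
  L.IsCausalCurveOn univ γ ∧ (∀ p : X, ¬ Tendsto γ atTop (𝓝 p)) ∧
    (∀ p : X, ¬ Tendsto γ atBot (𝓝 p))

/-- a Cauchy set: every doubly-inextendible causal curve meets it exactly once -/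
def IsCauchySet (L : LPLS X) (S : Set X) : Prop :=
  ∀ γ : ℝ → X, L.IsDoublyInextCurve γ →
    (∃ u : ℝ, γ u ∈ S) ∧ ∀ u v : ℝ, γ u ∈ S → γ v ∈ S → γ u = γ v

/-- volume of the open `r`-thickening of `I⁻(p)` -/
noncomputable def Vminus (L : LPLS X) [MeasurableSpace X] (μ : Measure X) (r : ℝ) (p : X) : ℝ :=
  (μ (Metric.thickening r (L.Iminus p))).toReal

/-- the averaged past volume function `t⁻(p) = ∫₀¹ V⁻ᵣ(p) dr` (without the sign) -/
noncomputable def tminus (L : LPLS X) [MeasurableSpace X] (μ : Measure X) (p : X) : ℝ :=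
  ∫ r in Ioo (0:ℝ) 1, L.Vminus μ r p

/-- full support: every nonempty open set has positive measure -/
def FullSupport [MeasurableSpace X] (μ : Measure X) : Prop :=
  ∀ U : Set X, IsOpen U → U.Nonempty → 0 < μ U

end LPLS

section Aux

open ENNReal

variable {X : Type*} [MetricSpace X]

lemma LPLS.vminus_nonneg (L : LPLS X) [MeasurableSpace X] (μ : Measure X) (r : ℝ) (p : X) :
    0 ≤ L.Vminus μ r p := ENNReal.toReal_nonneg

lemma LPLS.tminus_nonneg (L : LPLS X) [MeasurableSpace X] (μ : Measure X) (p : X) :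
    0 ≤ L.tminus μ p :=
  setIntegral_nonneg measurableSet_Ioo fun _ _ => ENNReal.toReal_nonneg

lemma LPLS.tminus_le_vone (L : LPLS X) [MeasurableSpace X] (μ : Measure X)
    [IsProbabilityMeasure μ] (p : X) : L.tminus μ p ≤ L.Vminus μ 1 p := by
  have hb : ∀ r ∈ Ioo (0:ℝ) 1, ‖L.Vminus μ r p‖ ≤ L.Vminus μ 1 p := by
    intro r hr
    rw [Real.norm_of_nonneg (L.vminus_nonneg μ r p)]
    exact ENNReal.toReal_mono (measure_ne_top μ _)
      (measure_mono (Metric.thickening_mono hr.2.le _))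
  have h := norm_setIntegral_le_of_norm_le_const (μ := (volume : Measure ℝ))
    (s := Ioo (0:ℝ) 1) (f := fun r => L.Vminus μ r p)
    (by simp [Real.volume_Ioo]) hb
  have h2 : L.tminus μ p ≤ L.Vminus μ 1 p * (volume (Ioo (0:ℝ) 1)).toReal :=
    le_trans (le_abs_self _) h
  simpa [Real.volume_Ioo] using h2

end Aux

/-- In a globally hyperbolic, causally simple, approximating Lorentzian pre-length
space with limit curves over a proper metric space, the averaged past volume
function tends to `0` along any past-inextendible causal curve. -/
theorem LPLS.tminus_tendsto_zero_along_pastInext {X : Type*} [MetricSpace X]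
    [ProperSpace X] [MeasurableSpace X] [BorelSpace X]
    (L : LPLS X) (μ : Measure X) [IsProbabilityMeasure μ]
    (hfull : LPLS.FullSupport μ) (happ : L.Approximating) (hlc : L.HasLimitCurves)
    (hnti : L.NonTotallyImprisoning)
    (hdiamonds : ∀ p q : X, IsCompact (L.Jplus p ∩ L.Jminus q))
    (hsimple : ∀ p : X, IsClosed (L.Jplus p) ∧ IsClosed (L.Jminus p))
    (γ : ℝ → X) (hγ : L.IsPastInextCurve γ) :
    Tendsto (fun s => L.tminus μ (γ s)) atBot (𝓝 0) := by
  classical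
  obtain ⟨hcc, hinext⟩ := hγ
  by_contra hcon
  -- Step 1: extract ε > 0 with tminus ≥ ε frequently at -∞
  have key : ∃ ε > 0, ∀ a : ℝ, ∃ u ≤ a, ε ≤ L.tminus μ (γ u) := by
    by_contra h
    push_neg at h
    apply hcon
    rw [Metric.tendsto_nhds]
    intro ε hε
    obtain ⟨a, ha⟩ := h ε hε
    rw [eventually_atBot]
    refine ⟨a, fun u hu => ?_⟩
    rw [Real.dist_eq, sub_zero, abs_of_nonneg (L.tminus_nonneg μ (γ u))]
    exact ha u hu
  obtain ⟨ε, hε, H⟩ := key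
  choose! g hg1 hg2 using H
  -- Step 2: build a decreasing sequence of parameters
  let s : ℕ → ℝ := fun n => Nat.rec (g 0) (fun _ prev => g (prev - 1)) n
  have hs0 : s 0 ≤ 0 := hg1 0
  have hsucc : ∀ n, s (n + 1) ≤ s n - 1 := fun n => hg1 _
  have hst : ∀ n, ε ≤ L.tminus μ (γ (s n)) := by
    intro n
    cases n with
    | zero => exact hg2 0
    | succ k => exact hg2 _
  have hanti : StrictAnti s := strictAnti_nat_of_succ_lt fun n =>
    lt_of_le_of_lt (hsucc n) (by linarith)
  have hsle : ∀ n : ℕ, s n ≤ s 0 - n := by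
    intro n
    induction n with
    | zero => simp
    | succ k ih =>
      have := hsucc k
      push_cast
      linarith
  have hsle0 : ∀ n : ℕ, s n ≤ 0 := fun n => by
    have := hsle n
    have : s n ≤ s 0 := by
      have := hsle n; have : (0:ℝ) ≤ n := Nat.cast_nonneg n; linarith [hsle n]
    linarith
  -- Step 3: nested causal pasts
  have hJnest : ∀ m n : ℕ, m ≤ n → L.Jminus (γ (s n)) ⊆ L.Jminus (γ (s m)) := by
    intro m n hmn
    rcases eq_or_lt_of_le hmn with rfl | h
    · exact subset_rfl
    · intro x hx
      exact L.causal_trans hx (hcc.2.2 (mem_Iic.mpr (hsle0 n)) (mem_Iic.mpr (hsle0 m)) (hanti h))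
  -- Step 4: thickenings of the pasts have measure ≥ ε, and their intersection is nonempty
  set W : ℕ → Set X := fun m => Metric.thickening 1 (L.Jminus (γ (s m))) with hW
  have hWanti : Antitone W := fun m n h =>
    Metric.thickening_subset_of_subset 1 (hJnest m n h)
  have hWmeas : ∀ m, MeasureTheory.NullMeasurableSet (W m) μ := fun m =>
    (Metric.isOpen_thickening.measurableSet).nullMeasurableSet
  have hWge : ∀ m, ENNReal.ofReal ε ≤ μ (W m) := by
    intro m
    have h1 : Metric.thickening 1 (L.Iminus (γ (s m))) ⊆ W m :=
      Metric.thickening_subset_of_subset 1 (fun x hx => L.chron_subset_causal hx)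
    have h2 : ε ≤ L.Vminus μ 1 (γ (s m)) := (hst m).trans (L.tminus_le_vone μ (γ (s m)))
    calc ENNReal.ofReal ε ≤ ENNReal.ofReal (L.Vminus μ 1 (γ (s m))) :=
          ENNReal.ofReal_le_ofReal h2
      _ = μ (Metric.thickening 1 (L.Iminus (γ (s m)))) :=
          ENNReal.ofReal_toReal (measure_ne_top μ _)
      _ ≤ μ (W m) := measure_mono h1
  have hlim := tendsto_measure_iInter_atTop (μ := μ) hWmeas hWanti ⟨0, measure_ne_top μ _⟩
  have hIge : ENNReal.ofReal ε ≤ μ (⋂ m, W m) := ge_of_tendsto' hlim hWge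
  have hne : (⋂ m, W m).Nonempty := by
    apply MeasureTheory.nonempty_of_measure_ne_zero (μ := μ)
    intro h0
    rw [h0] at hIge
    exact absurd (le_antisymm hIge zero_le).symm
      (ne_of_gt (ENNReal.ofReal_pos.mpr hε)).symm
  obtain ⟨x, hx⟩ := hne
  -- Step 5: extract a limit point q in all causal pasts
  have hy : ∀ m, ∃ y ∈ L.Jminus (γ (s m)), dist x y < 1 := by
    intro m
    have := mem_iInter.mp hx m
    rwa [hW, Metric.mem_thickening_iff] at this
  choose y hy1 hy2 using hy
  have hyball : ∀ m, y m ∈ Metric.closedBall x 1 := fun m => by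
    rw [Metric.mem_closedBall, dist_comm]
    exact (hy2 m).le
  obtain ⟨q, hq, φ, hφ, hconv⟩ := (isCompact_closedBall x 1).tendsto_subseq hyball
  have hqJ : ∀ m, q ∈ L.Jminus (γ (s m)) := by
    intro m
    apply (hsimple (γ (s m))).2.mem_of_tendsto hconv
    filter_upwards [eventually_ge_atTop m] with k hk
    exact hJnest m (φ k) (hk.trans hφ.le_apply) (hy1 (φ k))
  -- Step 6: the whole curve lies in the compact diamond J⁺(q) ∩ J⁻(γ 0)
  have hqγ : ∀ u ∈ Iic (0:ℝ), γ u ∈ L.Jplus q ∩ L.Jminus (γ 0) := by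
    intro u hu
    rw [mem_Iic] at hu
    constructor
    · obtain ⟨m, hm⟩ : ∃ m : ℕ, s m < u := by
        obtain ⟨m, hm⟩ := exists_nat_gt (s 0 - u)
        exact ⟨m, by have := hsle m; linarith⟩
      exact L.causal_trans (hqJ m)
        (hcc.2.2 (mem_Iic.mpr (hsle0 m)) (mem_Iic.mpr hu) hm)
    · rcases lt_or_eq_of_le hu with h | h
      · exact hcc.2.2 (mem_Iic.mpr hu) (mem_Iic.mpr le_rfl) h
      · rw [h]; exact L.causal_refl _
  obtain ⟨C, hC, hCb⟩ := hnti _ (hdiamonds q (γ 0))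
  have hvar : eVariationOn γ (Iic 0) ≤ ENNReal.ofReal C := hCb _ γ hcc hqγ
  -- Step 7: finite variation forces a limit at -∞, contradicting inextendibility
  set v : ℝ → ENNReal := fun t => eVariationOn γ (Icc t 0) with hv
  have hvle : ∀ t, v t ≤ ENNReal.ofReal C := fun t =>
    (eVariationOn.mono γ Icc_subset_Iic_self).trans hvar
  have hvtop : ∀ t, v t ≠ ⊤ := fun t => ((hvle t).trans_lt ENNReal.ofReal_lt_top).ne
  have hadd : ∀ a b : ℝ, a ≤ b → b ≤ 0 →
      eVariationOn γ (Icc a b) + v b = v a := by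
    intro a b hab hb0
    have h := eVariationOn.Icc_add_Icc γ (s := (univ : Set ℝ)) hab hb0 (mem_univ b)
    simpa using h
  have hvanti : ∀ a b : ℝ, a ≤ b → b ≤ 0 → v b ≤ v a := by
    intro a b hab hb0
    rw [← hadd a b hab hb0]
    exact le_add_self
  set A : ENNReal := ⨆ n : ℕ, v (-(n : ℝ)) with hA
  have hAle : A ≤ ENNReal.ofReal C := iSup_le fun n => hvle _
  have hAtop : A ≠ ⊤ := (hAle.trans_lt ENNReal.ofReal_lt_top).ne
  have hvA : ∀ a : ℝ, a ≤ 0 → v a ≤ A := by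
    intro a ha
    obtain ⟨m, hm⟩ := exists_nat_ge (-a)
    have : -(m:ℝ) ≤ a := by linarith
    exact (hvanti _ _ this ha).trans (le_iSup (fun n : ℕ => v (-(n:ℝ))) m)
  have hedist : ∀ (n : ℕ) (a b : ℝ), a ≤ b → b ≤ -(n:ℝ) →
      edist (γ a) (γ b) ≤ A - v (-(n:ℝ)) := by
    intro n a b hab hbn
    have hb0 : b ≤ 0 := hbn.trans (neg_nonpos.mpr (Nat.cast_nonneg n))
    have h1 : edist (γ a) (γ b) ≤ eVariationOn γ (Icc a b) :=
      eVariationOn.edist_le γ (mem_Icc.mpr ⟨le_rfl, hab⟩) (mem_Icc.mpr ⟨hab, le_rfl⟩)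
    have h2 : eVariationOn γ (Icc a b) = v a - v b :=
      ENNReal.eq_sub_of_add_eq (hvtop b) (hadd a b hab hb0)
    have h3 : v (-(n:ℝ)) ≤ v b := hvanti b (-(n:ℝ)) hbn (neg_nonpos.mpr (Nat.cast_nonneg n))
    calc edist (γ a) (γ b) ≤ v a - v b := h2 ▸ h1
      _ ≤ A - v (-(n:ℝ)) := tsub_le_tsub (hvA a (hab.trans hb0)) h3
  have hcauchy : Cauchy (Filter.map γ atBot) := by
    rw [EMetric.cauchy_iff]
    refine ⟨(Filter.map_neBot (f := atBot) (m := γ)).ne', ?_⟩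
    intro δ hδ
    have hn : ∃ n : ℕ, A < v (-(n:ℝ)) + δ := by
      by_contra h
      push_neg at h
      rcases eq_or_ne δ ⊤ with hδt | hδt
      · have := h 0
        rw [hδt, add_top] at this
        exact hAtop (top_le_iff.mp this)
      have hsup : A ≤ A - δ :=
        iSup_le fun n => ENNReal.le_sub_of_add_le_right hδt (h n)
      rcases eq_or_ne A 0 with h0 | h0
      · have := h 0
        rw [h0] at this
        have : δ ≤ 0 := le_trans (le_add_self) this
        exact absurd this (by simpa using hδ.ne')
      · exact absurd (hsup.trans_lt (ENNReal.sub_lt_self hAtop h0 hδ.ne'))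
          (lt_irrefl A)
    obtain ⟨n, hn⟩ := hn
    refine ⟨γ '' Iic (-(n:ℝ)), image_mem_map (Iic_mem_atBot _), ?_⟩
    have hkey : ∀ a b : ℝ, a ≤ -(n:ℝ) → b ≤ -(n:ℝ) → edist (γ a) (γ b) < δ := by
      intro a b ha hb
      have habs : ∀ a b : ℝ, a ≤ b → b ≤ -(n:ℝ) → edist (γ a) (γ b) < δ := by
        intro a b hab hbn
        calc edist (γ a) (γ b) ≤ A - v (-(n:ℝ)) := hedist n a b hab hbn
          _ < δ := ENNReal.sub_lt_of_lt_add (hvA (-(n:ℝ)) (neg_nonpos.mpr (Nat.cast_nonneg n)))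
            (by rwa [add_comm] at hn)
      rcases le_total a b with h | h
      · exact habs a b h hb
      · rw [edist_comm]; exact habs b a h ha
    rintro _ ⟨a, ha, rfl⟩ _ ⟨b, hb, rfl⟩
    exact hkey a b ha hb
  obtain ⟨p, hp⟩ := CompleteSpace.complete hcauchy
  exact hinext p hp
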